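/- Let (G,κ) be a capacitated graph with κ(x) ≤ d_G(x) for all x, with Z = ∅ and X independent. If for some x ∈ X there is no matching in G^aux − x saturating Y^κ, then (G,κ) has two DP-Nash subgraphs with distinct D-sets. -/

import Mathlib

open Finset
open scoped Classical

noncomputable section

variable {V : Type*} [Fintype V]

/-- Degree of a vertex in a (simple) graph on a finite vertex set. -/
def deg (H : SimpleGraph V) (x : V) : ℕ :=
  (Finset.univ.filter fun y => H.Adj x y).card

/-- `(D, P; H)` is a DP-Nash subgraph of the capacitated graph `(G, κ)`:
`H` is a spanning subgraph of `G`, bipartite with partite sets `D` and `P`,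
no vertex of `P` is isolated in `H`, and every `x ∈ D` has
`H`-degree `min (d_G x) (κ x)`. -/
def IsDPNash (G : SimpleGraph V) (κ : V → ℕ) (D P : Finset V) (H : SimpleGraph V) : Prop :=
  H ≤ G ∧ D ∪ P = Finset.univ ∧ Disjoint D P ∧
    (∀ ⦃u v⦄, H.Adj u v → (u ∈ D ∧ v ∈ P) ∨ (u ∈ P ∧ v ∈ D)) ∧
    (∀ v ∈ P, 0 < deg H v) ∧
    (∀ x ∈ D, deg H x = min (deg G x) (κ x))

/-- `X = {x : κ(x) = d_G(x)}`. -/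
def XX (G : SimpleGraph V) (κ : V → ℕ) : Finset V :=
  Finset.univ.filter fun x => κ x = deg G x

/-- `Y = N(X) \ X`. -/
def YY (G : SimpleGraph V) (κ : V → ℕ) : Finset V :=
  Finset.univ.filter fun y => y ∉ XX G κ ∧ ∃ x ∈ XX G κ, G.Adj x y

/-- `Z = V \ (X ∪ Y)`. -/
def ZZ (G : SimpleGraph V) (κ : V → ℕ) : Finset V :=
  Finset.univ \ (XX G κ ∪ YY G κ)

/-- `Y^{κ>0} = {y ∈ Y : κ(y) > 0}`. -/
def Ypos (G : SimpleGraph V) (κ : V → ℕ) : Finset V :=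
  (YY G κ).filter fun y => 0 < κ y

/-- The neighbours of `x` in `G` lying in `W`. -/
def nbrW (G : SimpleGraph V) (x : V) (W : Finset V) : Finset V :=
  Finset.univ.filter fun y => G.Adj x y ∧ y ∈ W

/-- `L(W) = {x ∈ X ∪ Z : |N_G(x) ∩ W| > d_G(x) - κ(x)}`. -/
def LL (G : SimpleGraph V) (κ : V → ℕ) (W : Finset V) : Finset V :=
  (XX G κ ∪ ZZ G κ).filter fun x => deg G x - κ x < (nbrW G x W).card

namespace DPAux

variable (G : SimpleGraph V) (κ : V → ℕ)

def nbr (x : V) : Finset V := Finset.univ.filter fun y => G.Adj x y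
lemma mem_nbr {x y : V} : y ∈ nbr G x ↔ G.Adj x y := by simp [nbr]
lemma deg_eq (x : V) : deg G x = (nbr G x).card := rfl
lemma kappa_le_deg_of_XX {x : V} (hx : x ∈ XX G κ) : κ x = deg G x := by
  simp only [XX, mem_filter] at hx; exact hx.2

lemma not_mem_XX_of_mem_YY {y : V} (hy : y ∈ YY G κ) : y ∉ XX G κ := by
  simp only [YY, mem_filter] at hy; exact hy.2.1

def NXS (S : Finset V) : Finset V := (XX G κ).filter fun t => ∃ y ∈ S, G.Adj y t
def gg (S : Finset V) : ℤ := (∑ y ∈ S, (κ y : ℤ)) - ((NXS G κ S).card : ℤ)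
def feas (S : Finset V) : Prop :=
  S.Nonempty ∧ S ⊆ YY G κ ∧ (∀ y ∈ S, κ y ≤ ((nbr G y) \ S).card) ∧ 0 ≤ gg G κ S
def pot (S : Finset V) : ℤ := gg G κ S * (Fintype.card V + 1) + S.card

lemma mem_NXS {S : Finset V} {t : V} :
    t ∈ NXS G κ S ↔ t ∈ XX G κ ∧ ∃ y ∈ S, G.Adj y t := by simp [NXS]

lemma NXS_mono {S T : Finset V} (h : S ⊆ T) : NXS G κ S ⊆ NXS G κ T := by
  intro t ht
  rw [mem_NXS] at ht ⊢
  obtain ⟨h1, y, hy, h2⟩ := ht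
  exact ⟨h1, y, h hy, h2⟩

lemma pot_lt_pot {S T : Finset V} (h : gg G κ S + 1 ≤ gg G κ T) :
    pot G κ S < pot G κ T := by
  unfold pot
  have hS : (S.card : ℤ) ≤ (Fintype.card V : ℤ) := by
    exact_mod_cast Finset.card_le_univ S
  have hT : (0 : ℤ) ≤ T.card := by positivity
  nlinarith [h]

/-- Any subset of a pot-maximal feasible set has no larger deficiency. -/
lemma gg_subset_le {S' : Finset V} (hfe : feas G κ S')
    (hmax : ∀ S, feas G κ S → pot G κ S ≤ pot G κ S') {R : Finset V} (hR : R ⊆ S') :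
    gg G κ R ≤ gg G κ S' := by
  rcases R.eq_empty_or_nonempty with rfl | hRne
  · have h1 : NXS G κ (∅ : Finset V) = ∅ := by
      ext t; simp [mem_NXS]
    have h2 : gg G κ (∅ : Finset V) = 0 := by simp [gg, h1]
    rw [h2]; exact hfe.2.2.2
  by_cases hRgg : 0 ≤ gg G κ R
  · -- R is feasible
    have hRfe : feas G κ R := by
      refine ⟨hRne, fun y hy => hfe.2.1 (hR hy), fun y hy => ?_, hRgg⟩
      calc κ y ≤ ((nbr G y) \ S').card := hfe.2.2.1 y (hR hy)
        _ ≤ ((nbr G y) \ R).card := card_le_card (sdiff_subset_sdiff (le_refl _) hR)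
    have hp := hmax R hRfe
    by_contra hcon
    push_neg at hcon
    exact absurd hp (not_le.2 (pot_lt_pot G κ (by omega)))
  · push_neg at hRgg
    have := hfe.2.2.2
    omega

lemma univ_eq_XY (hZ : ZZ G κ = ∅) : ∀ v : V, v ∈ XX G κ ∨ v ∈ YY G κ := by
  intro v
  by_contra h
  push_neg at h
  have : v ∈ ZZ G κ := by
    simp only [ZZ, mem_sdiff, mem_univ, mem_union, true_and]
    tauto
  rw [hZ] at this
  exact absurd this (notMem_empty v)

lemma deg_eq_card {H : SimpleGraph V} {x : V} {s : Finset V}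
    (h : ∀ v, H.Adj x v ↔ v ∈ s) : deg H x = s.card := by
  unfold deg
  congr 1
  ext v
  simp only [mem_filter, mem_univ, true_and, h]

lemma deg_pos {H : SimpleGraph V} {x w : V} (h : H.Adj x w) : 0 < deg H x := by
  unfold deg
  rw [card_pos, Finset.filter_nonempty_iff]
  exact ⟨w, mem_univ _, h⟩

lemma NXS_subset_nbr_sdiff {T : Finset V} (hT : T ⊆ YY G κ) {y : V} :
    NXS G κ {y} ⊆ (nbr G y) \ T := by
  intro u hu
  simp only [NXS, mem_filter, mem_singleton] at hu
  obtain ⟨huX, y', rfl, hadj⟩ := hu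
  rw [mem_sdiff, mem_nbr]
  exact ⟨hadj, fun huT => not_mem_XX_of_mem_YY G κ (hT huT) huX⟩

lemma exists_violator (x : V)
    (hnomatch : ¬ ∃ f : V × ℕ → V,
      Set.InjOn f {p : V × ℕ | p.1 ∈ YY G κ ∧ p.2 < κ p.1} ∧
      ∀ p : V × ℕ, p.1 ∈ YY G κ → p.2 < κ p.1 →
        f p ∈ XX G κ ∧ f p ≠ x ∧ G.Adj p.1 (f p)) :
    ∃ S : Finset V, S.Nonempty ∧ S ⊆ YY G κ ∧ 0 ≤ gg G κ S := by
  by_contra hno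
  push_neg at hno
  apply hnomatch
  -- set up Hall
  set t : {p : V × ℕ // p.1 ∈ YY G κ ∧ p.2 < κ p.1} → Finset V :=
    fun p => ((XX G κ) ∩ nbr G p.1.1).erase x with ht
  have hall : ∀ s : Finset {p : V × ℕ // p.1 ∈ YY G κ ∧ p.2 < κ p.1},
      s.card ≤ (s.biUnion t).card := by
    intro s
    rcases s.eq_empty_or_nonempty with rfl | hs
    · simp
    set S : Finset V := s.image (fun p => p.1.1) with hS
    have hSY : S ⊆ YY G κ := by
      intro y hy
      simp only [hS, mem_image] at hy
      obtain ⟨p, _, rfl⟩ := hy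
      exact p.2.1
    have hSne : S.Nonempty := hs.image _
    have hgg : gg G κ S < 0 := hno S hSne hSY
    -- claim 1 : s.card ≤ ∑ κ over S
    have hc1 : s.card ≤ ∑ y ∈ S, κ y := by
      rw [Finset.card_eq_sum_card_fiberwise (f := fun p => p.1.1) (t := S)
        (fun p hp => mem_image.2 ⟨p, hp, rfl⟩)]
      apply Finset.sum_le_sum
      intro y hy
      have : (s.filter fun p => p.1.1 = y).card ≤ (Finset.range (κ y)).card := by
        apply Finset.card_le_card_of_injOn (fun p => p.1.2)
        · intro p hp
          simp only [Finset.coe_filter, Set.mem_setOf_eq] at hp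
          have h2 := p.2.2
          rw [hp.2] at h2
          simpa using h2
        · intro p hp q hq hpq
          simp only [Finset.coe_filter, Set.mem_setOf_eq] at hp hq
          apply Subtype.ext
          apply Prod.ext
          · rw [hp.2, hq.2]
          · simpa using hpq
      simpa using this
    -- claim 2 : ∑ κ over S + 1 ≤ card NXS
    have hc2 : (∑ y ∈ S, κ y) + 1 ≤ (NXS G κ S).card := by
      unfold gg at hgg
      rw [show (∑ y ∈ S, (κ y : ℤ)) = ((∑ y ∈ S, κ y : ℕ) : ℤ) by push_cast; ring] at hgg
      omega
    -- claim 3 : NXS S \ {x} ⊆ biUnion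
    have hc3 : (NXS G κ S).erase x ⊆ s.biUnion t := by
      intro u hu
      rw [mem_erase] at hu
      obtain ⟨hux, hu⟩ := hu
      simp only [NXS, mem_filter] at hu
      obtain ⟨huX, y, hyS, hadj⟩ := hu
      simp only [hS, mem_image] at hyS
      obtain ⟨p, hps, hpy⟩ := hyS
      rw [mem_biUnion]
      refine ⟨p, hps, ?_⟩
      rw [ht, mem_erase]
      refine ⟨hux, mem_inter.2 ⟨huX, ?_⟩⟩
      rw [mem_nbr, hpy]
      exact hadj
    calc s.card ≤ ∑ y ∈ S, κ y := hc1
      _ ≤ (NXS G κ S).card - 1 := by omega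
      _ ≤ ((NXS G κ S).erase x).card := by
          rw [Finset.card_erase_eq_ite]
          split <;> omega
      _ ≤ (s.biUnion t).card := card_le_card hc3
  obtain ⟨f₀, hf₀inj, hf₀mem⟩ :=
    (Finset.all_card_le_biUnion_card_iff_exists_injective t).1 hall
  refine ⟨fun p => if h : (p.1 ∈ YY G κ ∧ p.2 < κ p.1) then f₀ ⟨p, h⟩ else x, ?_, ?_⟩
  · intro p hp q hq hpq
    simp only [Set.mem_setOf_eq] at hp hq
    dsimp only at hpq
    rw [dif_pos hp, dif_pos hq] at hpq
    have := hf₀inj hpq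
    exact congrArg Subtype.val this
  · intro p h1 h2
    dsimp only
    rw [dif_pos (⟨h1, h2⟩ : p.1 ∈ YY G κ ∧ p.2 < κ p.1)]
    have := hf₀mem ⟨p, ⟨h1, h2⟩⟩
    rw [ht, mem_erase, mem_inter, mem_nbr] at this
    exact ⟨this.2.1, this.1, this.2.2⟩

lemma exists_feas (hκ : ∀ v, κ v ≤ deg G v)
    (h : ∃ S : Finset V, S.Nonempty ∧ S ⊆ YY G κ ∧ 0 ≤ gg G κ S) :
    ∃ S : Finset V, feas G κ S := by
  classical
  set W : Finset (Finset V) :=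
    Finset.univ.powerset.filter (fun S => S.Nonempty ∧ S ⊆ YY G κ ∧ 0 ≤ gg G κ S) with hW
  have hWne : W.Nonempty := by
    obtain ⟨S, h1, h2, h3⟩ := h
    exact ⟨S, by simp [hW, h1, h2, h3]⟩
  obtain ⟨S, hSW, hSmin⟩ := W.exists_min_image Finset.card hWne
  simp only [hW, mem_filter, mem_powerset] at hSW
  obtain ⟨-, hSne, hSY, hSgg⟩ := hSW
  refine ⟨S, hSne, hSY, ?_, hSgg⟩
  intro y hy
  rcases eq_or_lt_of_le (Finset.one_le_card.2 hSne) with hcard | hcard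
  · -- |S| = 1, so S = {y}
    obtain ⟨z, hz⟩ := Finset.card_eq_one.1 hcard.symm
    subst hz
    rw [mem_singleton] at hy
    subst hy
    have : (nbr G y) \ {y} = nbr G y := by
      apply Finset.sdiff_eq_self_of_disjoint
      simp [Finset.disjoint_singleton_right, mem_nbr]
    rw [this, ← deg_eq]
    exact hκ y
  · -- |S| ≥ 2 : singleton {y} is not a violator
    have hsing : ¬ (0 ≤ gg G κ {y}) := by
      intro hcon
      have hmem : {y} ∈ W := by
        simp only [hW, mem_filter, mem_powerset]
        exact ⟨subset_univ _, singleton_nonempty y, by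
          intro u hu; rw [mem_singleton] at hu; subst hu; exact hSY hy, hcon⟩
      have := hSmin {y} hmem
      simp only [card_singleton] at this
      omega
    push_neg at hsing
    unfold gg at hsing
    simp only [sum_singleton] at hsing
    have hlt : κ y < (NXS G κ {y}).card := by exact_mod_cast by omega
    calc κ y ≤ (NXS G κ {y}).card - 1 := by omega
      _ ≤ (NXS G κ {y}).card := Nat.sub_le _ _
      _ ≤ ((nbr G y) \ S).card := card_le_card (NXS_subset_nbr_sdiff G κ hSY)

lemma main_hall (hκ : ∀ v, κ v ≤ deg G v) {S' : Finset V} (hfe : feas G κ S')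
    (hmax : ∀ S, feas G κ S → pot G κ S ≤ pot G κ S') :
    ∀ A ⊆ (NXS G κ S') ∪ ((YY G κ \ S').filter fun p => (XX G κ) ∩ nbr G p ⊆ NXS G κ S'),
      A.card ≤ ∑ y ∈ S'.filter (fun y => ∃ a ∈ A, G.Adj y a), κ y := by
  classical
  set TT := NXS G κ S' with hTT
  set QQ := ((YY G κ \ S').filter fun p => (XX G κ) ∩ nbr G p ⊆ TT) with hQQ
  set CC := TT ∪ QQ with hCC
  -- basic facts about CC
  have hS'Y : S' ⊆ YY G κ := hfe.2.1
  have hCCdisjS' : ∀ c ∈ CC, c ∉ S' := by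
    intro c hc hcS
    rw [hCC, mem_union] at hc
    rcases hc with hc | hc
    · exact not_mem_XX_of_mem_YY G κ (hS'Y hcS) ((mem_filter.1 hc).1)
    · rw [hQQ, mem_filter, mem_sdiff] at hc
      exact hc.1.2 hcS
  by_contra hcon
  push_neg at hcon
  obtain ⟨A₀, hA₀sub, hA₀⟩ := hcon
  -- pick a minimum-cardinality violator
  set W : Finset (Finset V) := CC.powerset.filter
    (fun A => ∑ y ∈ S'.filter (fun y => ∃ a ∈ A, G.Adj y a), κ y < A.card) with hWdef
  have hWne : W.Nonempty := ⟨A₀, by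
    rw [hWdef, mem_filter, mem_powerset]; exact ⟨hA₀sub, hA₀⟩⟩
  obtain ⟨A, hAW, hAmin⟩ := W.exists_min_image Finset.card hWne
  rw [hWdef, mem_filter, mem_powerset] at hAW
  obtain ⟨hACC, hAV⟩ := hAW
  set B := S'.filter (fun y => ∃ a ∈ A, G.Adj y a) with hB
  have hBS' : B ⊆ S' := filter_subset _ _
  have hmin : ∀ A' ⊆ CC, A'.card < A.card →
      A'.card ≤ ∑ y ∈ S'.filter (fun y => ∃ a ∈ A', G.Adj y a), κ y := by
    intro A' hA'CC hlt
    by_contra hc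
    push_neg at hc
    have : A' ∈ W := by
      rw [hWdef, mem_filter, mem_powerset]; exact ⟨hA'CC, hc⟩
    exact absurd (hAmin A' this) (not_le.2 hlt)
  set AT := A ∩ TT with hAT
  set AQ := A ∩ QQ with hAQ
  have hAsplit : A = AT ∪ AQ := by
    rw [hAT, hAQ, ← inter_union_distrib_left]
    exact (inter_eq_left.2 hACC).symm
  have hATQdisj : Disjoint AT AQ := by
    apply Finset.disjoint_left.2
    intro a haT haQ
    rw [hAT, mem_inter] at haT
    rw [hAQ, mem_inter] at haQ
    have h1 := (mem_filter.1 haT.2).1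
    have h2 := mem_sdiff.1 (mem_filter.1 haQ.2).1
    exact not_mem_XX_of_mem_YY G κ h2.1 h1
  have hcards : A.card = AT.card + AQ.card := by
    rw [hAsplit]; exact card_union_of_disjoint hATQdisj
  -- key sums in ℤ
  have hANS' : ∀ a ∈ A, ∀ y ∈ S', G.Adj y a → y ∈ B := by
    intro a ha y hy hadj
    rw [hB, mem_filter]
    exact ⟨hy, a, ha, hadj⟩
  -- ===== Case AQ = ∅ : A ⊆ TT =====
  by_cases hAQe : AQ = ∅
  · have hATT : A ⊆ TT := by
      intro a ha
      have := hAsplit ▸ ha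
      rw [mem_union] at this
      rcases this with h | h
      · exact (mem_inter.1 h).2
      · rw [hAQe] at h; exact absurd h (notMem_empty a)
    have hgR := gg_subset_le G κ hfe hmax (sdiff_subset : S' \ B ⊆ S')
    have hsum : (∑ y ∈ S' \ B, (κ y : ℤ)) + (∑ y ∈ B, (κ y : ℤ)) = ∑ y ∈ S', (κ y : ℤ) :=
      Finset.sum_sdiff hBS'
    have hNXSsub : NXS G κ (S' \ B) ⊆ TT := NXS_mono G κ sdiff_subset
    have hAdisjN : ∀ a ∈ A, a ∉ NXS G κ (S' \ B) := by
      intro a ha hmem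
      rw [mem_NXS] at hmem
      obtain ⟨-, y, hy, hadj⟩ := hmem
      rw [mem_sdiff] at hy
      exact hy.2 (hANS' a ha y hy.1 hadj)
    have hcard1 : A.card + (NXS G κ (S' \ B)).card ≤ TT.card := by
      rw [← card_union_of_disjoint (Finset.disjoint_left.2 hAdisjN)]
      apply card_le_card
      exact union_subset hATT hNXSsub
    -- gg inequality gives the contradiction
    unfold gg at hgR
    rw [← hTT] at hgR
    have hBig : (A.card : ℤ) ≤ ∑ y ∈ B, (κ y : ℤ) := by
      have h1 : (TT.card : ℤ) - (NXS G κ (S' \ B)).card ≤ ∑ y ∈ B, (κ y : ℤ) := by omega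
      have h2 : (A.card : ℤ) + (NXS G κ (S' \ B)).card ≤ (TT.card : ℤ) := by
        exact_mod_cast hcard1
      omega
    have : (A.card : ℤ) ≤ ((∑ y ∈ B, κ y : ℕ) : ℤ) := by
      rw [show ((∑ y ∈ B, κ y : ℕ) : ℤ) = ∑ y ∈ B, (κ y : ℤ) by push_cast; ring]
      exact hBig
    have := (Nat.cast_le (α := ℤ)).1 this
    omega
  -- ===== AQ nonempty =====
  have hAQne : AQ.Nonempty := nonempty_iff_ne_empty.2 hAQe
  -- helper for potentials
  have hpot_ins : ∀ (T : Finset V) (c : ℤ), feas G κ T → gg G κ T = gg G κ S' + c → 0 ≤ c →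
      S'.card < T.card → False := by
    intro T c hTfe hggT hc hcard
    have hle := hmax T hTfe
    unfold pot at hle
    rw [hggT] at hle
    have h1 : (S'.card : ℤ) < T.card := by exact_mod_cast hcard
    have h2 : (0 : ℤ) ≤ (Fintype.card V : ℤ) := by positivity
    nlinarith
  -- every q ∈ AQ is "type a" : |nbr q \ S'| < κ q
  have htypea : ∀ q ∈ AQ, ((nbr G q) \ S').card < κ q := by
    intro q hqAQ
    rw [hAQ, mem_inter] at hqAQ
    obtain ⟨hqA, hqQQ⟩ := hqAQ
    have hqQQ' := hqQQ
    rw [hQQ, mem_filter, mem_sdiff] at hqQQ'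
    obtain ⟨⟨hqY, hqS'⟩, hqNX⟩ := hqQQ'
    have hqnotnbr : q ∉ nbr G q := by
      rw [mem_nbr]; exact G.loopless.irrefl q
    by_contra hno
    push_neg at hno
    -- Sq = insert q S'
    have hNXSq : NXS G κ (insert q S') = TT := by
      ext t
      rw [mem_NXS, hTT, mem_NXS]
      constructor
      · rintro ⟨htX, y, hy, hadj⟩
        rw [mem_insert] at hy
        rcases hy with rfl | hy
        · have : t ∈ XX G κ ∩ nbr G y := mem_inter.2 ⟨htX, (mem_nbr G).2 hadj⟩
          have := hqNX this
          rw [hTT, mem_NXS] at this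
          exact this
        · exact ⟨htX, y, hy, hadj⟩
      · rintro ⟨htX, y, hy, hadj⟩
        exact ⟨htX, y, mem_insert_of_mem hy, hadj⟩
    have hggSq : gg G κ (insert q S') = gg G κ S' + κ q := by
      unfold gg
      rw [hNXSq, Finset.sum_insert hqS', ← hTT]
      ring
    -- case analysis on failure of (i) for insert q S'
    by_cases hii : ∀ w ∈ insert q S', κ w ≤ ((nbr G w) \ insert q S').card
    · -- Sq is feasible : potential contradiction
      have hfeSq : feas G κ (insert q S') :=
        ⟨insert_nonempty _ _, insert_subset hqY hfe.2.1, hii, by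
          have := hfe.2.2.2; rw [hggSq]; positivity⟩
      exact hpot_ins (insert q S') (κ q) hfeSq hggSq (by positivity)
        (by rw [card_insert_of_notMem hqS']; omega)
    · push_neg at hii
      obtain ⟨w, hwSq, hwgt⟩ := hii
      rw [mem_insert] at hwSq
      rcases hwSq with rfl | hwS'
      · -- w = q : contradicts hno
        have : (nbr G w) \ insert w S' = (nbr G w) \ S' := by
          rw [Finset.sdiff_insert, Finset.erase_eq_of_notMem]
          rw [mem_sdiff]
          exact fun h => hqnotnbr h.1
        rw [this] at hwgt
        omega
      · -- w ∈ S' is tight and adjacent to q : reduction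
        have hwfe : κ w ≤ ((nbr G w) \ S').card := hfe.2.2.1 w hwS'
        have hsd : (nbr G w) \ insert q S' = ((nbr G w) \ S').erase q :=
          Finset.sdiff_insert _ _ _
        rw [hsd] at hwgt
        have hqnbrw : q ∈ (nbr G w) \ S' := by
          by_contra hq
          rw [Finset.erase_eq_of_notMem hq] at hwgt
          omega
        have htight : κ w = ((nbr G w) \ S').card := by
          have := Finset.card_erase_of_mem hqnbrw
          omega
        -- the reduction A' = A \ nbr w
        set A' := A \ nbr G w with hA'
        have hwB : w ∈ B := by
          rw [hB, mem_filter]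
          exact ⟨hwS', q, hqA, (mem_nbr G).1 (mem_sdiff.1 hqnbrw).1⟩
        have hA'lt : A'.card < A.card := by
          apply card_lt_card
          rw [Finset.ssubset_iff_of_subset sdiff_subset]
          exact ⟨q, hqA, fun hq => (mem_sdiff.1 hq).2 (mem_sdiff.1 hqnbrw).1⟩
        have hHall' := hmin A' (subset_trans sdiff_subset hACC) hA'lt
        have hBB' : S'.filter (fun y => ∃ a ∈ A', G.Adj y a) ⊆ B.erase w := by
          intro y hy
          rw [mem_filter] at hy
          obtain ⟨hyS', a, haA', hadj⟩ := hy
          rw [hA', mem_sdiff] at haA'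
          rw [mem_erase]
          constructor
          · rintro rfl
            exact haA'.2 ((mem_nbr G).2 hadj)
          · exact hANS' a haA'.1 y hyS' hadj
        have hsum1 : ∑ y ∈ S'.filter (fun y => ∃ a ∈ A', G.Adj y a), κ y
            ≤ ∑ y ∈ B.erase w, κ y := Finset.sum_le_sum_of_subset hBB'
        have hsum2 : ∑ y ∈ B.erase w, κ y + κ w = ∑ y ∈ B, κ y :=
          Finset.sum_erase_add B κ hwB
        have hAsub : A ⊆ A' ∪ (A ∩ nbr G w) := by
          intro a ha
          rw [mem_union, hA', mem_sdiff, mem_inter]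
          by_cases h : a ∈ nbr G w
          · right; exact ⟨ha, h⟩
          · left; exact ⟨ha, h⟩
        have hcA : A.card ≤ A'.card + (A ∩ nbr G w).card :=
          le_trans (card_le_card hAsub) (card_union_le _ _)
        have hAnw : (A ∩ nbr G w).card ≤ κ w := by
          rw [htight]
          apply card_le_card
          intro a ha
          rw [mem_inter] at ha
          rw [mem_sdiff]
          exact ⟨ha.2, hCCdisjS' a (hACC ha.1)⟩
        omega
  -- ===== the swap =====
  -- M : maximum-size independent subset of AQ
  set Wi : Finset (Finset V) := AQ.powerset.filter
    (fun M => ∀ p ∈ M, ∀ r ∈ M, p ≠ r → ¬ G.Adj p r) with hWi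
  have hWine : Wi.Nonempty := ⟨∅, by
    rw [hWi, mem_filter, mem_powerset]
    exact ⟨empty_subset _, by intro p hp; exact absurd hp (notMem_empty p)⟩⟩
  obtain ⟨M, hMWi, hMmax⟩ := Wi.exists_max_image Finset.card hWine
  rw [hWi, mem_filter, mem_powerset] at hMWi
  obtain ⟨hMAQ, hMind⟩ := hMWi
  have hMne : M.Nonempty := by
    obtain ⟨q0, hq0⟩ := hAQne
    have h1 : ({q0} : Finset V) ∈ Wi := by
      rw [hWi, mem_filter, mem_powerset]
      refine ⟨singleton_subset_iff.2 hq0, ?_⟩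
      intro p hp r hr hpr
      rw [mem_singleton] at hp hr
      subst hp; subst hr; exact absurd rfl hpr
    have := hMmax _ h1
    rw [card_singleton] at this
    rw [← card_pos]; omega
  have hMdom : ∀ p ∈ AQ, p ∉ M → ∃ y ∈ M, G.Adj y p := by
    intro p hp hpM
    by_contra hnone
    push_neg at hnone
    have hins : insert p M ∈ Wi := by
      rw [hWi, mem_filter, mem_powerset]
      refine ⟨insert_subset hp hMAQ, ?_⟩
      intro u hu r hr hur
      rw [mem_insert] at hu hr
      rcases hu with rfl | hu <;> rcases hr with rfl | hr
      · exact absurd rfl hur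
      · exact fun hadj => hnone r hr hadj.symm
      · exact fun hadj => hnone u hu hadj
      · exact hMind u hu r hr hur
    have := hMmax _ hins
    rw [card_insert_of_notMem hpM] at this
    omega
  -- elements of A are not in S'
  have hAnotS' : ∀ a ∈ A, a ∉ S' := fun a ha => hCCdisjS' a (hACC ha)
  -- the counting inequality
  have hMcount : AQ.card + (AT ∩ NXS G κ M).card ≤ ∑ y ∈ M, κ y := by
    set D := (AQ \ M) ∪ (AT ∩ NXS G κ M) with hD
    have hDsub : D ⊆ M.biUnion (fun q => nbr G q ∩ D) := by
      intro d hd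
      rw [mem_biUnion]
      have hd' := hd
      rw [hD, mem_union] at hd'
      rcases hd' with h | h
      · rw [mem_sdiff] at h
        obtain ⟨y, hyM, hadj⟩ := hMdom d h.1 h.2
        exact ⟨y, hyM, mem_inter.2 ⟨(mem_nbr G).2 hadj, hd⟩⟩
      · have := (mem_inter.1 h).2
        rw [mem_NXS] at this
        obtain ⟨-, y, hyM, hadj⟩ := this
        exact ⟨y, hyM, mem_inter.2 ⟨(mem_nbr G).2 hadj, hd⟩⟩
    have hDcard : D.card ≤ ∑ q ∈ M, (nbr G q ∩ D).card :=
      le_trans (card_le_card hDsub) (card_biUnion_le)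
    have hperq : ∀ q ∈ M, (nbr G q ∩ D).card + 1 ≤ κ q := by
      intro q hq
      have h1 : nbr G q ∩ D ⊆ (nbr G q) \ S' := by
        intro d hd
        rw [mem_inter] at hd
        rw [mem_sdiff]
        refine ⟨hd.1, ?_⟩
        have hd' := hd.2
        rw [hD, mem_union] at hd'
        rcases hd' with h | h
        · exact hAnotS' d (hAsplit ▸ mem_union_right _ (mem_sdiff.1 h).1)
        · exact hAnotS' d (hAsplit ▸ mem_union_left _ (mem_inter.1 h).1)
      have h2 := htypea q (hMAQ hq)
      have h3 := card_le_card h1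
      omega
    have hsumM : ∑ q ∈ M, ((nbr G q ∩ D).card + 1) ≤ ∑ q ∈ M, κ q :=
      Finset.sum_le_sum hperq
    rw [Finset.sum_add_distrib, Finset.sum_const, smul_eq_mul, mul_one] at hsumM
    have hDdisj : Disjoint (AQ \ M) (AT ∩ NXS G κ M) := by
      apply Finset.disjoint_left.2
      intro d h1 h2
      have hdQ := (mem_sdiff.1 h1).1
      rw [hAQ, mem_inter] at hdQ
      have hdT := (mem_inter.1 h2).1
      rw [hAT, mem_inter] at hdT
      have hdY := mem_sdiff.1 (mem_filter.1 (by rw [hQQ] at hdQ; exact hdQ.2)).1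
      exact not_mem_XX_of_mem_YY G κ hdY.1 (mem_filter.1 (by rw [hTT] at hdT; exact hdT.2)).1
    have hDc : D.card = (AQ \ M).card + (AT ∩ NXS G κ M).card := by
      rw [hD]; exact card_union_of_disjoint hDdisj
    have hAQc : (AQ \ M).card = AQ.card - M.card := card_sdiff_of_subset hMAQ
    have hMle : M.card ≤ AQ.card := card_le_card hMAQ
    omega
  -- construct S'' and get the contradiction
  set S'' := (S' \ B) ∪ M with hS''
  have hMnotS' : ∀ m ∈ M, m ∉ S' := fun m hm => hAnotS' m (hAsplit ▸ mem_union_right _ (hMAQ hm))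
  have hdisjMS : Disjoint (S' \ B) M := by
    apply Finset.disjoint_right.2
    intro m hm
    intro hmem
    exact hMnotS' m hm (mem_sdiff.1 hmem).1
  -- (i) for S''
  have hS''i : ∀ y ∈ S'', κ y ≤ ((nbr G y) \ S'').card := by
    intro y hy
    rw [hS'', mem_union] at hy
    rcases hy with hy | hy
    · have hy' := mem_sdiff.1 hy
      have hsub : (nbr G y) \ S' ⊆ (nbr G y) \ S'' := by
        intro v hv
        rw [mem_sdiff] at hv ⊢
        refine ⟨hv.1, ?_⟩
        rw [hS'', mem_union]
        push_neg
        refine ⟨fun h => hv.2 (mem_sdiff.1 h).1, fun hvM => ?_⟩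
        -- y adjacent to v ∈ M ⊆ A, so y ∈ B, contradiction
        have : y ∈ B := hANS' v (hAsplit ▸ mem_union_right _ (hMAQ hvM)) y hy'.1 ((mem_nbr G).1 hv.1)
        exact hy'.2 this
      calc κ y ≤ ((nbr G y) \ S').card := hfe.2.2.1 y hy'.1
        _ ≤ ((nbr G y) \ S'').card := card_le_card hsub
    · -- y ∈ M : nbr y ∩ S'' = ∅
      have hemp : (nbr G y) \ S'' = nbr G y := by
        apply Finset.sdiff_eq_self_of_disjoint
        apply Finset.disjoint_left.2
        intro v hv hvS''
        rw [hS'', mem_union] at hvS''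
        rcases hvS'' with h | h
        · have h' := mem_sdiff.1 h
          exact h'.2 (hANS' y (hAsplit ▸ mem_union_right _ (hMAQ hy)) v h'.1 ((mem_nbr G).1 hv).symm)
        · exact hMind y hy v h (G.ne_of_adj ((mem_nbr G).1 hv)) ((mem_nbr G).1 hv)
      rw [hemp, ← deg_eq]
      exact hκ y
  -- gg of S''
  have hNXS'' : NXS G κ S'' ⊆ TT \ (AT \ NXS G κ M) := by
    intro t ht
    rw [mem_NXS] at ht
    obtain ⟨htX, y, hyS'', hadj⟩ := ht
    rw [hS'', mem_union] at hyS''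
    rw [mem_sdiff]
    constructor
    · rcases hyS'' with h | h
      · rw [hTT]
        exact NXS_mono G κ (sdiff_subset : S' \ B ⊆ S') (by rw [mem_NXS]; exact ⟨htX, y, h, hadj⟩)
      · have hyQQ : y ∈ QQ := hMAQ h |> (fun hh => (mem_inter.1 (hAQ ▸ hh)).2)
        rw [hQQ, mem_filter] at hyQQ
        exact hyQQ.2 (mem_inter.2 ⟨htX, (mem_nbr G).2 hadj⟩)
    · rw [mem_sdiff]
      push_neg
      intro htAT
      rcases hyS'' with h | h
      · exfalso
        have h' := mem_sdiff.1 h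
        exact h'.2 (hANS' t (hAsplit ▸ mem_union_left _ htAT) y h'.1 hadj)
      · rw [mem_NXS]
        exact ⟨htX, y, h, hadj⟩
  have hATsubTT : AT ⊆ TT := by
    rw [hAT]; exact inter_subset_right
  have hcNXS'' : (NXS G κ S'').card + AT.card ≤ TT.card + (AT ∩ NXS G κ M).card := by
    have h1 : (NXS G κ S'').card ≤ TT.card - (AT \ NXS G κ M).card := by
      calc (NXS G κ S'').card ≤ (TT \ (AT \ NXS G κ M)).card := card_le_card hNXS''
        _ = TT.card - (AT \ NXS G κ M).card := card_sdiff_of_subset (subset_trans sdiff_subset hATsubTT)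
    have h2 : (AT \ NXS G κ M).card = AT.card - (AT ∩ NXS G κ M).card := by
      have := Finset.card_inter_add_card_sdiff AT (NXS G κ M)
      omega
    have h3 : (AT ∩ NXS G κ M).card ≤ AT.card := card_le_card inter_subset_left
    have h4 : (AT \ NXS G κ M).card ≤ TT.card := card_le_card (subset_trans sdiff_subset hATsubTT)
    omega
  -- assemble gg S' + 1 ≤ gg S''
  have hsumS'' : ∑ y ∈ S'', (κ y : ℤ) = (∑ y ∈ S' \ B, (κ y : ℤ)) + ∑ y ∈ M, (κ y : ℤ) := by
    rw [hS'']; exact Finset.sum_union hdisjMS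
  have hsumS' : (∑ y ∈ S' \ B, (κ y : ℤ)) + (∑ y ∈ B, (κ y : ℤ)) = ∑ y ∈ S', (κ y : ℤ) :=
    Finset.sum_sdiff hBS'
  have hAVz : (∑ y ∈ B, (κ y : ℤ)) + 1 ≤ A.card := by
    have : ((∑ y ∈ B, κ y : ℕ) : ℤ) < (A.card : ℤ) := by exact_mod_cast hAV
    rw [show ((∑ y ∈ B, κ y : ℕ) : ℤ) = ∑ y ∈ B, (κ y : ℤ) by push_cast; ring] at this
    omega
  have hMcountz : (AQ.card : ℤ) + ((AT ∩ NXS G κ M).card : ℤ) ≤ ∑ y ∈ M, (κ y : ℤ) := by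
    have : ((AQ.card + (AT ∩ NXS G κ M).card : ℕ) : ℤ) ≤ ((∑ y ∈ M, κ y : ℕ) : ℤ) := by
      exact_mod_cast hMcount
    rw [show ((∑ y ∈ M, κ y : ℕ) : ℤ) = ∑ y ∈ M, (κ y : ℤ) by push_cast; ring] at this
    push_cast at this
    omega
  have hcNXSz : ((NXS G κ S'').card : ℤ) + AT.card ≤ TT.card + ((AT ∩ NXS G κ M).card : ℤ) := by
    exact_mod_cast hcNXS''
  have hcardsz : (A.card : ℤ) = AT.card + AQ.card := by exact_mod_cast hcards
  have hgg'' : gg G κ S' + 1 ≤ gg G κ S'' := by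
    unfold gg
    rw [hsumS'', ← hTT]
    omega
  -- S'' is feasible, contradiction with maximality
  have hfeS'' : feas G κ S'' := by
    refine ⟨?_, ?_, hS''i, ?_⟩
    · obtain ⟨m, hm⟩ := hMne
      exact ⟨m, by rw [hS'', mem_union]; right; exact hm⟩
    · intro y hy
      rw [hS'', mem_union] at hy
      rcases hy with hy | hy
      · exact hS'Y (mem_sdiff.1 hy).1
      · have hyQQ : y ∈ QQ := (mem_inter.1 (hAQ ▸ hMAQ hy)).2
        rw [hQQ, mem_filter, mem_sdiff] at hyQQ
        exact hyQQ.1.1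
    · have := hfe.2.2.2
      omega
  exact absurd (hmax S'' hfeS'') (not_le.2 (pot_lt_pot G κ hgg''))

lemma exists_second (hκ : ∀ v, κ v ≤ deg G v)
    (hZ : ZZ G κ = ∅)
    (hind : ∀ u ∈ XX G κ, ∀ v ∈ XX G κ, ¬ G.Adj u v)
    (h : ∃ S : Finset V, feas G κ S) :
    ∃ (D₂ P₂ : Finset V) (H₂ : SimpleGraph V),
      IsDPNash G κ D₂ P₂ H₂ ∧ D₂ ≠ XX G κ := by
  classical
  -- choose a pot-maximal feasible set
  set W : Finset (Finset V) := Finset.univ.powerset.filter (feas G κ) with hW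
  have hWne : W.Nonempty := by
    obtain ⟨S, hS⟩ := h
    exact ⟨S, by rw [hW, mem_filter, mem_powerset]; exact ⟨subset_univ _, hS⟩⟩
  obtain ⟨S', hS'W, hS'max⟩ := W.exists_max_image (pot G κ) hWne
  rw [hW, mem_filter] at hS'W
  have hfe : feas G κ S' := hS'W.2
  have hmax : ∀ S, feas G κ S → pot G κ S ≤ pot G κ S' := by
    intro S hS
    exact hS'max S (by rw [hW, mem_filter, mem_powerset]; exact ⟨subset_univ _, hS⟩)
  have hhall := main_hall G κ hκ hfe hmax
  set TT := NXS G κ S' with hTT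
  set QQ := ((YY G κ \ S').filter fun p => (XX G κ) ∩ nbr G p ⊆ TT) with hQQ
  set CC := TT ∪ QQ with hCC
  have hS'Y : S' ⊆ YY G κ := hfe.2.1
  -- Hall for the bipartite copies graph
  set t : ↥CC → Finset (V × ℕ) :=
    fun c => (S'.filter (fun y => G.Adj y (c : V))).biUnion
      (fun y => {y} ×ˢ Finset.range (κ y)) with ht
  have hallcond : ∀ s : Finset ↥CC, s.card ≤ (s.biUnion t).card := by
    intro s
    set A := s.image Subtype.val with hA
    have hACC : A ⊆ CC := by
      intro a ha
      rw [hA, mem_image] at ha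
      obtain ⟨c, -, rfl⟩ := ha
      exact c.2
    have hcardA : A.card = s.card := Finset.card_image_of_injective s Subtype.coe_injective
    have hbi : s.biUnion t = (S'.filter (fun y => ∃ a ∈ A, G.Adj y a)).biUnion
        (fun y => {y} ×ˢ Finset.range (κ y)) := by
      ext p
      rw [mem_biUnion, mem_biUnion]
      constructor
      · rintro ⟨c, hcs, hp⟩
        rw [ht] at hp
        rw [mem_biUnion] at hp
        obtain ⟨y, hy, hp2⟩ := hp
        rw [mem_filter] at hy
        refine ⟨y, mem_filter.2 ⟨hy.1, ⟨(c : V), ?_, hy.2⟩⟩, hp2⟩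
        rw [hA]
        exact mem_image.2 ⟨c, hcs, rfl⟩
      · rintro ⟨y, hy, hp2⟩
        rw [mem_filter] at hy
        obtain ⟨hyS', a, haA, hadj⟩ := hy
        rw [hA, mem_image] at haA
        obtain ⟨c, hcs, rfl⟩ := haA
        refine ⟨c, hcs, ?_⟩
        rw [ht, mem_biUnion]
        exact ⟨y, mem_filter.2 ⟨hyS', hadj⟩, hp2⟩
    rw [hbi]
    have hdisj : ∀ y1 ∈ (S'.filter (fun y => ∃ a ∈ A, G.Adj y a)),
        ∀ y2 ∈ (S'.filter (fun y => ∃ a ∈ A, G.Adj y a)), y1 ≠ y2 →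
        Disjoint ({y1} ×ˢ Finset.range (κ y1)) ({y2} ×ˢ Finset.range (κ y2)) := by
      intro y1 _ y2 _ hne
      apply Finset.disjoint_left.2
      intro p hp1 hp2
      rw [Finset.mem_product, mem_singleton] at hp1 hp2
      exact hne (hp1.1 ▸ hp2.1 ▸ rfl)
    rw [Finset.card_biUnion hdisj]
    have hcy : ∀ y, ({y} ×ˢ Finset.range (κ y)).card = κ y := by
      intro y
      rw [Finset.card_product, card_singleton, Finset.card_range, one_mul]
    rw [Finset.sum_congr rfl (fun y _ => hcy y), ← hcardA]
    exact hhall A hACC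
  obtain ⟨f, hfinj, hfmem⟩ :=
    (Finset.all_card_le_biUnion_card_iff_exists_injective t).1 hallcond
  -- properties of f
  have hfprop : ∀ c : ↥CC, (f c).1 ∈ S' ∧ G.Adj (f c).1 (c : V) ∧ (f c).2 < κ (f c).1 := by
    intro c
    have := hfmem c
    rw [ht] at this
    simp only [mem_biUnion, mem_filter, Finset.mem_product, mem_singleton, mem_range] at this
    obtain ⟨y, ⟨hyS', hadj⟩, hy1, hy2⟩ := this
    subst hy1
    exact ⟨hyS', hadj, hy2⟩
  -- basic disjointness facts
  have hCCdisjS' : ∀ c ∈ CC, c ∉ S' := by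
    intro c hc hcS
    rw [hCC, mem_union] at hc
    rcases hc with hc | hc
    · exact not_mem_XX_of_mem_YY G κ (hS'Y hcS) (mem_filter.1 (hTT ▸ hc)).1
    · rw [hQQ, mem_filter, mem_sdiff] at hc
      exact hc.1.2 hcS
  -- the sets E_y
  set Ey : V → Finset V := fun y => (CC.attach.filter (fun c => (f c).1 = y)).image Subtype.val
    with hEydef
  have hEy_sub : ∀ y, Ey y ⊆ (nbr G y) \ S' := by
    intro y a ha
    rw [hEydef, mem_image] at ha
    obtain ⟨c, hc, rfl⟩ := ha
    rw [mem_filter] at hc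
    have hp := hfprop c
    rw [hc.2] at hp
    rw [mem_sdiff, mem_nbr]
    exact ⟨hp.2.1, hCCdisjS' _ c.2⟩
  have hEy_card : ∀ y, (Ey y).card ≤ κ y := by
    intro y
    calc (Ey y).card ≤ (CC.attach.filter (fun c => (f c).1 = y)).card :=
          Finset.card_image_le
      _ ≤ (Finset.range (κ y)).card := by
          apply Finset.card_le_card_of_injOn (fun c => (f c).2)
          · intro c hc
            rw [Finset.mem_coe, mem_filter] at hc
            rw [Finset.mem_coe, mem_range, ← hc.2]
            exact (hfprop c).2.2
          · intro c hc c' hc' hcc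
            simp only [Finset.coe_filter, Set.mem_setOf_eq] at hc hc'
            apply hfinj
            apply Prod.ext
            · rw [hc.2, hc'.2]
            · exact hcc
      _ = κ y := Finset.card_range _
  have hEy_cover : ∀ c : ↥CC, (c : V) ∈ Ey ((f c).1) := by
    intro c
    rw [hEydef, mem_image]
    exact ⟨c, mem_filter.2 ⟨mem_attach _ _, rfl⟩, rfl⟩
  -- choose the F_y
  have hex : ∀ y, y ∈ S' → ∃ F : Finset V, Ey y ⊆ F ∧ F ⊆ (nbr G y) \ S' ∧ F.card = κ y :=
    fun y hy => Finset.exists_subsuperset_card_eq (hEy_sub y) (hEy_card y) (hfe.2.2.1 y hy)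
  set Fsel : V → Finset V := fun y => if hy : y ∈ S' then (hex y hy).choose else ∅ with hFdef
  have hF1 : ∀ y (hy : y ∈ S'), Ey y ⊆ Fsel y := by
    intro y hy
    rw [hFdef]
    dsimp only
    rw [dif_pos hy]
    exact (hex y hy).choose_spec.1
  have hF2 : ∀ y (hy : y ∈ S'), Fsel y ⊆ (nbr G y) \ S' := by
    intro y hy
    rw [hFdef]
    dsimp only
    rw [dif_pos hy]
    exact (hex y hy).choose_spec.2.1
  have hF3 : ∀ y (hy : y ∈ S'), (Fsel y).card = κ y := by
    intro y hy
    rw [hFdef]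
    dsimp only
    rw [dif_pos hy]
    exact (hex y hy).choose_spec.2.2
  -- the graph
  set R : V → V → Prop :=
    fun u v => (u ∈ XX G κ ∧ u ∉ TT ∧ G.Adj u v) ∨ (u ∈ S' ∧ v ∈ Fsel u) with hRdef
  have hRadj : ∀ u v, R u v → G.Adj u v := by
    intro u v h
    rcases h with ⟨-, -, h⟩ | ⟨h1, h2⟩
    · exact h
    · exact (mem_nbr G).1 (mem_sdiff.1 (hF2 u h1 h2)).1
  set H₂ : SimpleGraph V := ⟨fun u v => R u v ∨ R v u,
    ⟨fun u v h => Or.symm h⟩,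
    ⟨fun u h => G.loopless.irrefl u (by rcases h with h | h <;> exact hRadj _ _ h)⟩⟩ with hH₂
  have hH₂adj : ∀ u v, H₂.Adj u v → G.Adj u v := by
    intro u v h
    rcases h with h | h
    · exact hRadj _ _ h
    · exact (hRadj _ _ h).symm
  set D2 : Finset V := (XX G κ \ TT) ∪ S' with hD2
  -- cross condition
  have hcross : ∀ u v, R u v → u ∈ D2 ∧ v ∉ D2 := by
    intro u v h
    rcases h with ⟨huX, huT, hadj⟩ | ⟨huS', hvF⟩
    · refine ⟨mem_union_left _ (mem_sdiff.2 ⟨huX, huT⟩), ?_⟩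
      intro hv
      rw [hD2, mem_union] at hv
      rcases hv with hv | hv
      · exact hind u huX v (mem_sdiff.1 hv).1 hadj
      · apply huT
        rw [hTT, mem_NXS]
        exact ⟨huX, v, hv, hadj.symm⟩
    · refine ⟨mem_union_right _ huS', ?_⟩
      have hv2 := hF2 u huS' hvF
      rw [mem_sdiff, mem_nbr] at hv2
      intro hv
      rw [hD2, mem_union] at hv
      rcases hv with hv | hv
      · rw [mem_sdiff] at hv
        apply hv.2
        rw [hTT, mem_NXS]
        exact ⟨hv.1, u, huS', hv2.1⟩
      · exact hv2.2 hv
  -- conclusion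
  refine ⟨D2, D2ᶜ, H₂, ⟨?_, union_compl _, disjoint_compl_right, ?_, ?_, ?_⟩, ?_⟩
  · intro u v h
    exact hH₂adj u v h
  · intro u v h
    rcases h with h | h
    · exact Or.inl ⟨(hcross u v h).1, mem_compl.2 (hcross u v h).2⟩
    · exact Or.inr ⟨mem_compl.2 (hcross v u h).2, (hcross v u h).1⟩
  · -- coverage of P
    intro p hp
    have hpD : p ∉ D2 := mem_compl.1 hp
    have hpcc : ∀ hpCC : p ∈ CC, 0 < deg H₂ p := by
      intro hpCC
      set c : ↥CC := ⟨p, hpCC⟩ with hc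
      have hy := hfprop c
      apply deg_pos (H := H₂) (w := (f c).1)
      right
      rw [hRdef]
      right
      exact ⟨hy.1, hF1 _ hy.1 (hEy_cover c)⟩
    rcases univ_eq_XY G κ hZ p with hpX | hpY
    · have hpTT : p ∈ TT := by
        by_contra hpT
        exact hpD (mem_union_left _ (mem_sdiff.2 ⟨hpX, hpT⟩))
      exact hpcc (mem_union_left _ hpTT)
    · have hpS' : p ∉ S' := fun hmem => hpD (mem_union_right _ hmem)
      by_cases hsub : (XX G κ) ∩ nbr G p ⊆ TT
      · refine hpcc (mem_union_right _ ?_)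
        rw [hQQ, mem_filter, mem_sdiff]
        exact ⟨⟨hpY, hpS'⟩, hsub⟩
      · rw [Finset.not_subset] at hsub
        obtain ⟨x', hx'mem, hx'T⟩ := hsub
        rw [mem_inter, mem_nbr] at hx'mem
        apply deg_pos (H := H₂) (w := x')
        right
        rw [hRdef]
        left
        exact ⟨hx'mem.1, hx'T, hx'mem.2.symm⟩
  · -- degrees in D
    intro u hu
    rw [hD2, mem_union] at hu
    rcases hu with hu | hu
    · rw [mem_sdiff] at hu
      have hdeg : deg H₂ u = (nbr G u).card := by
        apply deg_eq_card
        intro v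
        rw [mem_nbr]
        constructor
        · exact hH₂adj u v
        · intro hadj
          left
          rw [hRdef]
          exact Or.inl ⟨hu.1, hu.2, hadj⟩
      rw [hdeg, ← deg_eq, kappa_le_deg_of_XX G κ hu.1, min_self]
    · have hdeg : deg H₂ u = (Fsel u).card := by
        apply deg_eq_card
        intro v
        constructor
        · intro h
          rcases h with h | h
          · rw [hRdef] at h
            rcases h with ⟨huX, -, -⟩ | ⟨-, hvF⟩
            · exact absurd huX (not_mem_XX_of_mem_YY G κ (hS'Y hu))
            · exact hvF
          · rw [hRdef] at h
            rcases h with ⟨hvX, hvT, hadj⟩ | ⟨hvS', huF⟩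
            · exfalso
              apply hvT
              rw [hTT, mem_NXS]
              exact ⟨hvX, u, hu, hadj.symm⟩
            · exact absurd hu (mem_sdiff.1 (hF2 v hvS' huF)).2
        · intro hv
          left
          rw [hRdef]
          exact Or.inr ⟨hu, hv⟩
      rw [hdeg, hF3 u hu, min_eq_right (hκ u)]
  · -- D2 ≠ XX
    obtain ⟨m, hm⟩ := hfe.1
    intro heq
    exact not_mem_XX_of_mem_YY G κ (hS'Y hm) (heq ▸ (mem_union_right _ hm))

lemma exists_first (hκ : ∀ v, κ v ≤ deg G v)
    (hZ : ZZ G κ = ∅)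
    (hind : ∀ u ∈ XX G κ, ∀ v ∈ XX G κ, ¬ G.Adj u v) :
    ∃ (H₁ : SimpleGraph V), IsDPNash G κ (XX G κ) ((XX G κ)ᶜ) H₁ := by
  classical
  refine ⟨⟨fun u v => G.Adj u v ∧ (u ∈ XX G κ ∨ v ∈ XX G κ), ?_, ?_⟩, ?_, ?_, ?_, ?_, ?_, ?_⟩
  · constructor; intro u v ⟨h1, h2⟩; exact ⟨h1.symm, h2.symm⟩
  · constructor; intro u ⟨h1, _⟩; exact G.loopless.irrefl u h1
  · intro u v h; exact h.1
  · exact union_compl _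
  · exact disjoint_compl_right
  · rintro u v ⟨hadj, hu | hv⟩
    · left
      exact ⟨hu, mem_compl.2 fun hv => hind u hu v hv hadj⟩
    · right
      exact ⟨mem_compl.2 fun hu => hind u hu v hv hadj, hv⟩
  · intro v hv
    have hv' : v ∉ XX G κ := mem_compl.1 hv
    have hvY : v ∈ YY G κ := (univ_eq_XY G κ hZ v).resolve_left hv'
    simp only [YY, mem_filter] at hvY
    obtain ⟨_, _, x, hx, hadj⟩ := hvY
    exact deg_pos (show G.Adj v x ∧ (v ∈ XX G κ ∨ x ∈ XX G κ) from ⟨hadj.symm, Or.inr hx⟩)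
  · intro x hx
    have hdeg := deg_eq_card (H := (⟨fun u v => G.Adj u v ∧ (u ∈ XX G κ ∨ v ∈ XX G κ),
        ⟨fun u v ⟨h1, h2⟩ => ⟨h1.symm, h2.symm⟩⟩,
        ⟨fun u ⟨h1, _⟩ => G.loopless.irrefl u h1⟩⟩ : SimpleGraph V)) (x := x) (s := nbr G x)
      (fun v => by
        constructor
        · intro h; exact (mem_nbr G).2 h.1
        · intro h; exact ⟨(mem_nbr G).1 h, Or.inl hx⟩)
    rw [hdeg, kappa_le_deg_of_XX G κ hx, min_self, deg_eq]

end DPAux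

/-- If `Z = ∅`, `X` is independent and for some `x ∈ X` there is no matching
in `G^aux - x` saturating `Y^κ`, then there are two DP-Nash subgraphs with
distinct `D`-sets. -/
theorem stmt13 (G : SimpleGraph V) (κ : V → ℕ) (hκ : ∀ v, κ v ≤ deg G v)
    (hedge : ∀ u v, G.Adj u v → 0 < κ u ∨ 0 < κ v)
    (hZ : ZZ G κ = ∅)
    (hind : ∀ u ∈ XX G κ, ∀ v ∈ XX G κ, ¬ G.Adj u v)
    (x : V) (hx : x ∈ XX G κ)
    (hnomatch : ¬ ∃ f : V × ℕ → V,
      Set.InjOn f {p : V × ℕ | p.1 ∈ YY G κ ∧ p.2 < κ p.1} ∧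
      ∀ p : V × ℕ, p.1 ∈ YY G κ → p.2 < κ p.1 →
        f p ∈ XX G κ ∧ f p ≠ x ∧ G.Adj p.1 (f p)) :
    ∃ (D₁ P₁ : Finset V) (H₁ : SimpleGraph V) (D₂ P₂ : Finset V) (H₂ : SimpleGraph V),
      IsDPNash G κ D₁ P₁ H₁ ∧ IsDPNash G κ D₂ P₂ H₂ ∧ D₁ ≠ D₂ := by
  obtain ⟨H₁, h1⟩ := DPAux.exists_first G κ hκ hZ hind
  have hviol := DPAux.exists_violator G κ x hnomatch
  have hfeas := DPAux.exists_feas G κ hκ hviol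
  obtain ⟨D₂, P₂, H₂, h2, hne⟩ := DPAux.exists_second G κ hκ hZ hind hfeas
  exact ⟨XX G κ, (XX G κ)ᶜ, H₁, D₂, P₂, H₂, h1, h2, fun h => hne h.symm⟩
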